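/- Let G(q) = α q qᵀ + β qᵀ + q βᵀ + γ and G̃(q) = α̃ q qᵀ + β̃ qᵀ + q β̃ᵀ + γ̃ with α, α̃ ∈ ℝ, β, β̃ ∈ ℝⁿ constant vectors, γ, γ̃ constant symmetric n×n real matrices, and let U ⊆ ℝⁿ be an open set on which det G(q) ≠ 0. Then the (1,1)-tensor field L(q) = −G̃(q) G(q)⁻¹ on U has vanishing Nijenhuis torsion: for all i, j, k ∈ {1,…,n} and all q ∈ U, Σ_{l=1}^n ( L_{lj} ∂_l L_{ik} − L_{lk} ∂_l L_{ij} + L_{il} ∂_k L_{lj} − L_{il} ∂_j L_{lk} ) = 0, where ∂_l = ∂/∂q_l and L_{ik} denotes the (i,k) entry of L. -/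

import Mathlib

open Finset Matrix

/-- `G(q) = α q qᵀ + β qᵀ + q βᵀ + γ`. -/
def Gmat {n : ℕ} (α : ℝ) (β : Fin n → ℝ) (γ : Matrix (Fin n) (Fin n) ℝ)
    (q : Fin n → ℝ) : Matrix (Fin n) (Fin n) ℝ :=
  Matrix.of fun i j => α * q i * q j + β i * q j + q i * β j + γ i j

/-- `L(q) = −G̃(q) G(q)⁻¹`. -/
noncomputable def Lmat {n : ℕ} (α αt : ℝ) (β βt : Fin n → ℝ)
    (γ γt : Matrix (Fin n) (Fin n) ℝ) (q : Fin n → ℝ) :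
    Matrix (Fin n) (Fin n) ℝ :=
  -(Gmat αt βt γt q) * (Gmat α β γ q)⁻¹

-- entry differentiability of G
lemma gdiff {n : ℕ} (α : ℝ) (β : Fin n → ℝ) (γ : Matrix (Fin n) (Fin n) ℝ)
    (m k : Fin n) (q : Fin n → ℝ) :
    DifferentiableAt ℝ (fun w => Gmat α β γ w m k) q := by
  simp only [Gmat, Matrix.of_apply]
  have h1 : DifferentiableAt ℝ (fun w : Fin n → ℝ => w m) q := differentiableAt_apply (𝕜 := ℝ) m q
  have h2 : DifferentiableAt ℝ (fun w : Fin n → ℝ => w k) q := differentiableAt_apply (𝕜 := ℝ) k q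
  exact ((((h1.const_mul α).mul h2).add (h2.const_mul (β m))).add (h1.mul_const (β k))).add_const _

-- det of matrix with differentiable entries
lemma detdiff {n : ℕ} {M : (Fin n → ℝ) → Matrix (Fin n) (Fin n) ℝ} {q : Fin n → ℝ}
    (h : ∀ a b, DifferentiableAt ℝ (fun w => M w a b) q) :
    DifferentiableAt ℝ (fun w => (M w).det) q := by
  simp only [Matrix.det_apply]
  apply DifferentiableAt.fun_sum
  intro σ _
  simp only [Units.smul_def, zsmul_eq_mul]
  have hp : DifferentiableAt ℝ (fun w => ∏ a : Fin n, M w (σ a) a) q :=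
    (HasFDerivAt.finset_prod (fun a _ => (h (σ a) a).hasFDerivAt)).differentiableAt
  exact hp.const_mul _

lemma adjdiff {n : ℕ} {M : (Fin n → ℝ) → Matrix (Fin n) (Fin n) ℝ} {q : Fin n → ℝ}
    (h : ∀ a b, DifferentiableAt ℝ (fun w => M w a b) q) (m k : Fin n) :
    DifferentiableAt ℝ (fun w => (M w).adjugate m k) q := by
  simp only [Matrix.adjugate_apply]
  apply detdiff
  intro a b
  simp only [Matrix.updateRow_apply]
  by_cases hak : a = k <;> simp [hak, differentiableAt_const, h]

lemma inv_entry {n : ℕ} (A : Matrix (Fin n) (Fin n) ℝ) (m k : Fin n) :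
    A⁻¹ m k = (A.det)⁻¹ * A.adjugate m k := by
  rw [Matrix.inv_def, Matrix.smul_apply, Ring.inverse_eq_inv', smul_eq_mul]

lemma invdiff {n : ℕ} {α : ℝ} {β : Fin n → ℝ} {γ : Matrix (Fin n) (Fin n) ℝ}
    {q : Fin n → ℝ} (hq : (Gmat α β γ q).det ≠ 0) (m k : Fin n) :
    DifferentiableAt ℝ (fun w => (Gmat α β γ w)⁻¹ m k) q := by
  have : (fun w => (Gmat α β γ w)⁻¹ m k)
      = fun w => ((Gmat α β γ w).det)⁻¹ * (Gmat α β γ w).adjugate m k := by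
    funext w; exact inv_entry _ m k
  rw [this]
  exact ((detdiff (fun a b => gdiff α β γ a b q)).inv hq).mul
    (adjdiff (fun a b => gdiff α β γ a b q) m k)

lemma ldiff {n : ℕ} {α αt : ℝ} {β βt : Fin n → ℝ} {γ γt : Matrix (Fin n) (Fin n) ℝ}
    {q : Fin n → ℝ} (hq : (Gmat α β γ q).det ≠ 0) (i k : Fin n) :
    DifferentiableAt ℝ (fun w => Lmat α αt β βt γ γt w i k) q := by
  have : (fun w => Lmat α αt β βt γ γt w i k)
      = fun w => ∑ m : Fin n, -(Gmat αt βt γt w i m) * (Gmat α β γ w)⁻¹ m k := by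
    funext w; simp [Lmat, Matrix.mul_apply]
  rw [this]
  exact DifferentiableAt.fun_sum fun m _ => ((gdiff αt βt γt i m q).neg).mul (invdiff hq m k)

lemma gfderiv {n : ℕ} (α : ℝ) (β : Fin n → ℝ) (γ : Matrix (Fin n) (Fin n) ℝ)
    (m k l : Fin n) (q : Fin n → ℝ) :
    fderiv ℝ (fun w => Gmat α β γ w m k) q (Pi.single l 1)
      = (if m = l then 1 else 0) * (α * q k + β k)
        + (if k = l then 1 else 0) * (α * q m + β m) := by
  have h1 := hasFDerivAt_apply (𝕜 := ℝ) (F' := fun _ : Fin n => ℝ) m q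
  have h2 := hasFDerivAt_apply (𝕜 := ℝ) (F' := fun _ : Fin n => ℝ) k q
  have hD := ((((h1.const_mul α).fun_mul h2).fun_add (h2.const_mul (β m))).fun_add
    (h1.mul_const (β k))).add_const (γ m k)
  have heq : (fun w => Gmat α β γ w m k)
      = fun w => α * w m * w k + β m * w k + w m * β k + γ m k := rfl
  rw [heq, hD.fderiv]
  simp only [ContinuousLinearMap.add_apply, ContinuousLinearMap.coe_smul',
    Pi.smul_apply, ContinuousLinearMap.proj_apply, ContinuousLinearMap.smulRight_apply,
    ContinuousLinearMap.coe_smul, smul_eq_mul, Pi.single_apply]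
  by_cases hml : m = l <;> by_cases hkl : k = l <;> simp [hml, hkl] <;> ring

lemma keyid {n : ℕ} {α αt : ℝ} {β βt : Fin n → ℝ} {γ γt : Matrix (Fin n) (Fin n) ℝ}
    {q : Fin n → ℝ} (hq : (Gmat α β γ q).det ≠ 0) (i k l : Fin n) :
    ∑ m : Fin n, (Lmat α αt β βt γ γt q i m
        * fderiv ℝ (fun w => Gmat α β γ w m k) q (Pi.single l 1)
      + Gmat α β γ q m k
        * fderiv ℝ (fun w => Lmat α αt β βt γ γt w i m) q (Pi.single l 1))
    = -(fderiv ℝ (fun w => Gmat αt βt γt w i k) q (Pi.single l 1)) := by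
  have hev : ∀ᶠ w in nhds q, (Gmat α β γ w).det ≠ 0 :=
    ((detdiff (fun a b => gdiff α β γ a b q)).continuousAt).eventually_ne hq
  have heq : (fun w => ∑ m : Fin n, Lmat α αt β βt γ γt w i m * Gmat α β γ w m k)
      =ᶠ[nhds q] (fun w => -(Gmat αt βt γt w i k)) := by
    filter_upwards [hev] with w hw
    have h1 : ∑ m : Fin n, Lmat α αt β βt γ γt w i m * Gmat α β γ w m k
        = (Lmat α αt β βt γ γt w * Gmat α β γ w) i k := (Matrix.mul_apply).symm
    rw [h1, Lmat, Matrix.mul_assoc, Matrix.nonsing_inv_mul _ (isUnit_iff_ne_zero.mpr hw),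
      Matrix.mul_one, Matrix.neg_apply]
  have hfd : fderiv ℝ _ q = fderiv ℝ _ q := heq.fderiv_eq
  have hLHS : fderiv ℝ (fun w => ∑ m : Fin n, Lmat α αt β βt γ γt w i m * Gmat α β γ w m k) q
        (Pi.single l 1)
      = ∑ m : Fin n, (Lmat α αt β βt γ γt q i m
          * fderiv ℝ (fun w => Gmat α β γ w m k) q (Pi.single l 1)
        + Gmat α β γ q m k
          * fderiv ℝ (fun w => Lmat α αt β βt γ γt w i m) q (Pi.single l 1)) := by
    rw [fderiv_fun_sum (fun m _ => (ldiff hq i m).fun_mul (gdiff α β γ m k q)),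
      ContinuousLinearMap.sum_apply]
    refine Finset.sum_congr rfl fun m _ => ?_
    rw [fderiv_fun_mul (ldiff hq i m) (gdiff α β γ m k q)]
    simp [ContinuousLinearMap.add_apply, ContinuousLinearMap.smul_apply, smul_eq_mul]
  have hRHS : fderiv ℝ (fun w => -(Gmat αt βt γt w i k)) q (Pi.single l 1)
      = -(fderiv ℝ (fun w => Gmat αt βt γt w i k) q (Pi.single l 1)) := by
    rw [fderiv_fun_neg]; simp
  rw [← hLHS, hfd, hRHS]

lemma hsolve {n : ℕ} {α αt : ℝ} {β βt : Fin n → ℝ} {γ γt : Matrix (Fin n) (Fin n) ℝ}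
    {q : Fin n → ℝ} (hq : (Gmat α β γ q).det ≠ 0) (i c l : Fin n) :
    fderiv ℝ (fun w => Lmat α αt β βt γ γt w i c) q (Pi.single l 1)
    = ∑ k : Fin n, (-(fderiv ℝ (fun w => Gmat αt βt γt w i k) q (Pi.single l 1))
        - ∑ m : Fin n, Lmat α αt β βt γ γt q i m
            * fderiv ℝ (fun w => Gmat α β γ w m k) q (Pi.single l 1))
        * (Gmat α β γ q)⁻¹ k c := by
  have hGA : ∀ m, (∑ k : Fin n, Gmat α β γ q m k * (Gmat α β γ q)⁻¹ k c)
      = if m = c then (1:ℝ) else 0 := by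
    intro m
    have h1 : ∑ k : Fin n, Gmat α β γ q m k * (Gmat α β γ q)⁻¹ k c
        = (Gmat α β γ q * (Gmat α β γ q)⁻¹) m c := (Matrix.mul_apply).symm
    rw [h1, Matrix.mul_nonsing_inv _ (isUnit_iff_ne_zero.mpr hq), Matrix.one_apply]
  set dL := fun m => fderiv ℝ (fun w => Lmat α αt β βt γ γt w i m) q (Pi.single l 1) with hdL
  calc fderiv ℝ (fun w => Lmat α αt β βt γ γt w i c) q (Pi.single l 1)
      = ∑ m : Fin n, dL m * (if m = c then (1:ℝ) else 0) := by
        simp [Finset.sum_ite_eq, hdL]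
    _ = ∑ m : Fin n, dL m * (∑ k : Fin n, Gmat α β γ q m k * (Gmat α β γ q)⁻¹ k c) := by
        refine Finset.sum_congr rfl fun m _ => ?_; rw [hGA]
    _ = ∑ m : Fin n, ∑ k : Fin n, dL m * (Gmat α β γ q m k * (Gmat α β γ q)⁻¹ k c) := by
        refine Finset.sum_congr rfl fun m _ => ?_; rw [Finset.mul_sum]
    _ = ∑ k : Fin n, (∑ m : Fin n, Gmat α β γ q m k * dL m) * (Gmat α β γ q)⁻¹ k c := by
        rw [Finset.sum_comm]
        refine Finset.sum_congr rfl fun k _ => ?_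
        rw [Finset.sum_mul]
        refine Finset.sum_congr rfl fun m _ => ?_; ring
    _ = ∑ k : Fin n, (-(fderiv ℝ (fun w => Gmat αt βt γt w i k) q (Pi.single l 1))
          - ∑ m : Fin n, Lmat α αt β βt γ γt q i m
              * fderiv ℝ (fun w => Gmat α β γ w m k) q (Pi.single l 1))
          * (Gmat α β γ q)⁻¹ k c := by
        refine Finset.sum_congr rfl fun k _ => ?_
        congr 1
        have h2 := keyid (αt := αt) (βt := βt) (γt := γt) hq i k l
        rw [Finset.sum_add_distrib] at h2
        rw [hdL]
        linarith [h2]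

lemma lfderiv {n : ℕ} {α αt : ℝ} {β βt : Fin n → ℝ} {γ γt : Matrix (Fin n) (Fin n) ℝ}
    {q : Fin n → ℝ} (hq : (Gmat α β γ q).det ≠ 0) (i c l : Fin n) :
    fderiv ℝ (fun w => Lmat α αt β βt γ γt w i c) q (Pi.single l 1)
    = -((if i = l then (1:ℝ) else 0)
          * ∑ k : Fin n, (αt * q k + βt k) * (Gmat α β γ q)⁻¹ k c)
      - Lmat α αt β βt γ γt q i l
          * ∑ k : Fin n, (α * q k + β k) * (Gmat α β γ q)⁻¹ k c
      - ((αt * q i + βt i)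
          + ∑ m : Fin n, Lmat α αt β βt γ γt q i m * (α * q m + β m))
          * (Gmat α β γ q)⁻¹ l c := by
  rw [hsolve hq i c l]
  have h1 : ∀ k : Fin n, ∑ m : Fin n, Lmat α αt β βt γ γt q i m
      * fderiv ℝ (fun w => Gmat α β γ w m k) q (Pi.single l 1)
      = Lmat α αt β βt γ γt q i l * (α * q k + β k)
        + (if k = l then (1:ℝ) else 0)
          * ∑ m : Fin n, Lmat α αt β βt γ γt q i m * (α * q m + β m) := by
    intro k
    have : ∀ m : Fin n, Lmat α αt β βt γ γt q i m
        * fderiv ℝ (fun w => Gmat α β γ w m k) q (Pi.single l 1)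
        = (if m = l then Lmat α αt β βt γ γt q i m * (α * q k + β k) else 0)
          + (if k = l then (1:ℝ) else 0)
            * (Lmat α αt β βt γ γt q i m * (α * q m + β m)) := by
      intro m
      rw [gfderiv]
      by_cases hml : m = l <;> by_cases hkl : k = l <;> simp [hml, hkl] <;> ring
    rw [Finset.sum_congr rfl fun m _ => this m, Finset.sum_add_distrib,
      Finset.sum_ite_eq' Finset.univ l
        (fun m => Lmat α αt β βt γ γt q i m * (α * q k + β k)),
      ← Finset.mul_sum]
    simp
  have h2 : ∀ k : Fin n,
      (-(fderiv ℝ (fun w => Gmat αt βt γt w i k) q (Pi.single l 1))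
        - ∑ m : Fin n, Lmat α αt β βt γ γt q i m
            * fderiv ℝ (fun w => Gmat α β γ w m k) q (Pi.single l 1))
        * (Gmat α β γ q)⁻¹ k c
      = -((if i = l then (1:ℝ) else 0) * ((αt * q k + βt k) * (Gmat α β γ q)⁻¹ k c))
        - (if k = l then (αt * q i + βt i
            + ∑ m : Fin n, Lmat α αt β βt γ γt q i m * (α * q m + β m))
              * (Gmat α β γ q)⁻¹ k c else 0)
        - Lmat α αt β βt γ γt q i l * ((α * q k + β k) * (Gmat α β γ q)⁻¹ k c) := by
    intro k
    rw [h1 k, gfderiv]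
    by_cases hil : i = l <;> by_cases hkl : k = l <;> simp [hil, hkl] <;> ring
  rw [Finset.sum_congr rfl fun k _ => h2 k, Finset.sum_sub_distrib, Finset.sum_sub_distrib,
    Finset.sum_neg_distrib, ← Finset.mul_sum, ← Finset.mul_sum,
    Finset.sum_ite_eq' Finset.univ l]
  simp only [Finset.mem_univ, if_true]
  ring

lemma gsymm {n : ℕ} {α : ℝ} {β : Fin n → ℝ} {γ : Matrix (Fin n) (Fin n) ℝ}
    (hγ : γ.IsSymm) (q : Fin n → ℝ) (a b : Fin n) :
    Gmat α β γ q a b = Gmat α β γ q b a := by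
  have hg : γ a b = γ b a := by
    conv_lhs => rw [← hγ]
    rw [Matrix.transpose_apply]
  simp only [Gmat, Matrix.of_apply, hg]
  ring

lemma ainvsymm {n : ℕ} {α : ℝ} {β : Fin n → ℝ} {γ : Matrix (Fin n) (Fin n) ℝ}
    (hγ : γ.IsSymm) (q : Fin n → ℝ) (a b : Fin n) :
    (Gmat α β γ q)⁻¹ a b = (Gmat α β γ q)⁻¹ b a := by
  have hGs : (Gmat α β γ q).IsSymm := by
    unfold Matrix.IsSymm
    ext a b
    rw [Matrix.transpose_apply]
    exact gsymm hγ q b a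
  have h : ((Gmat α β γ q)⁻¹)ᵀ = (Gmat α β γ q)⁻¹ := by
    rw [Matrix.transpose_nonsing_inv, hGs]
  conv_lhs => rw [← h]
  rw [Matrix.transpose_apply]

lemma msymm {n : ℕ} {α αt : ℝ} {β βt : Fin n → ℝ} {γ γt : Matrix (Fin n) (Fin n) ℝ}
    (hγ : γ.IsSymm) (hγt : γt.IsSymm) (q : Fin n → ℝ) (a b : Fin n) :
    ∑ l : Fin n, Lmat α αt β βt γ γt q l a * (Gmat α β γ q)⁻¹ l b
    = ∑ l : Fin n, Lmat α αt β βt γ γt q l b * (Gmat α β γ q)⁻¹ l a := by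
  have hexp : ∀ c d : Fin n, Lmat α αt β βt γ γt q c d
      = ∑ m : Fin n, -(Gmat αt βt γt q c m) * (Gmat α β γ q)⁻¹ m d := by
    intro c d; simp [Lmat, Matrix.mul_apply]
  simp only [hexp]
  simp only [Finset.sum_mul]
  rw [Finset.sum_comm]
  refine Finset.sum_congr rfl fun l _ => ?_
  refine Finset.sum_congr rfl fun m _ => ?_
  rw [gsymm hγt q m l]
  ring

lemma helperA {n : ℕ} (L A : Matrix (Fin n) (Fin n) ℝ) (i a b : Fin n) (c1 c2 c3 : ℝ) :
    ∑ l : Fin n, L l a * (-((if i = l then (1:ℝ) else 0) * c1) - L i l * c2 - c3 * A l b)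
    = -(L i a * c1) - (∑ l : Fin n, L i l * L l a) * c2
      - c3 * ∑ l : Fin n, L l a * A l b := by
  have h : ∀ l : Fin n, L l a * (-((if i = l then (1:ℝ) else 0) * c1) - L i l * c2 - c3 * A l b)
      = -(if i = l then L l a * c1 else 0) - L i l * L l a * c2 - c3 * (L l a * A l b) := by
    intro l; by_cases h : i = l <;> simp [h] <;> ring
  rw [Finset.sum_congr rfl fun l _ => h l, Finset.sum_sub_distrib, Finset.sum_sub_distrib,
    Finset.sum_neg_distrib, Finset.sum_ite_eq Finset.univ i _, ← Finset.sum_mul,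
    ← Finset.mul_sum]
  simp

lemma helperB {n : ℕ} (L A : Matrix (Fin n) (Fin n) ℝ) (i a b : Fin n) (c1 c2 : ℝ)
    (w : Fin n → ℝ) :
    ∑ l : Fin n, L i l * (-((if l = b then (1:ℝ) else 0) * c1) - L l b * c2 - w l * A b a)
    = -(L i b * c1) - (∑ l : Fin n, L i l * L l b) * c2
      - (∑ l : Fin n, L i l * w l) * A b a := by
  have h : ∀ l : Fin n, L i l * (-((if l = b then (1:ℝ) else 0) * c1) - L l b * c2 - w l * A b a)
      = -(if l = b then L i l * c1 else 0) - L i l * L l b * c2 - L i l * w l * A b a := by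
    intro l; by_cases h : l = b <;> simp [h] <;> ring
  rw [Finset.sum_congr rfl fun l _ => h l, Finset.sum_sub_distrib, Finset.sum_sub_distrib,
    Finset.sum_neg_distrib, Finset.sum_ite_eq' Finset.univ b _, ← Finset.sum_mul,
    ← Finset.sum_mul]
  simp

/-- STATEMENT 19: on an open set `U` where `det G ≠ 0`, the (1,1)-tensor field
`L = −G̃ G⁻¹` has vanishing Nijenhuis torsion:
`Σ_l (L_{lj} ∂_l L_{ik} − L_{lk} ∂_l L_{ij} + L_{il} ∂_k L_{lj} − L_{il} ∂_j L_{lk}) = 0`. -/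
theorem stmt19 (n : ℕ) (α αt : ℝ) (β βt : Fin n → ℝ)
    (γ γt : Matrix (Fin n) (Fin n) ℝ) (hγ : γ.IsSymm) (hγt : γt.IsSymm)
    (U : Set (Fin n → ℝ)) (hU : IsOpen U)
    (hdet : ∀ q ∈ U, (Gmat α β γ q).det ≠ 0) :
    ∀ (i j k : Fin n), ∀ q ∈ U,
      ∑ l : Fin n,
        (Lmat α αt β βt γ γt q l j
            * fderiv ℝ (fun w => Lmat α αt β βt γ γt w i k) q (Pi.single l 1)
          - Lmat α αt β βt γ γt q l k
            * fderiv ℝ (fun w => Lmat α αt β βt γ γt w i j) q (Pi.single l 1)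
          + Lmat α αt β βt γ γt q i l
            * fderiv ℝ (fun w => Lmat α αt β βt γ γt w l j) q (Pi.single k 1)
          - Lmat α αt β βt γ γt q i l
            * fderiv ℝ (fun w => Lmat α αt β βt γ γt w l k) q (Pi.single j 1))
        = 0 := by
  intro i j k q hqU
  have hq := hdet q hqU
  simp only [lfderiv hq]
  rw [Finset.sum_sub_distrib, Finset.sum_add_distrib, Finset.sum_sub_distrib]
  rw [helperA (Lmat α αt β βt γ γt q) (Gmat α β γ q)⁻¹ i j k _ _ _,
    helperA (Lmat α αt β βt γ γt q) (Gmat α β γ q)⁻¹ i k j _ _ _,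
    helperB (Lmat α αt β βt γ γt q) (Gmat α β γ q)⁻¹ i j k _ _
      (fun l => (αt * q l + βt l) + ∑ m : Fin n, Lmat α αt β βt γ γt q l m * (α * q m + β m)),
    helperB (Lmat α αt β βt γ γt q) (Gmat α β γ q)⁻¹ i k j _ _
      (fun l => (αt * q l + βt l) + ∑ m : Fin n, Lmat α αt β βt γ γt q l m * (α * q m + β m))]
  rw [msymm hγ hγt q j k, ainvsymm hγ q k j]
  ring
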